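/- Every instance of cluster aggregation on a weighted tree with input partition into connected clusters of strong diameter at most Δ admits a solution with additive distortion at most 4Δ: there is an assignment f from clusters to portals such that every vertex v satisfies d_{T[f^{-1}(f(v))]}(v, f(v)) ≤ d_T(v, P) + 4Δ, and each f^{-1}(p) induces a connected subtree. -/

import Mathlib

set_option linter.unusedSectionVars false

/-- Cost of a walk (list of vertices) in a weighted graph with weights `w`. -/
noncomputable def walkCost {V : Type*} (w : V → V → ENNReal) : List V → ENNReal
  | [] => 0
  | [_] => 0
  | a :: b :: l => w a b + walkCost w (b :: l)

/-- `l` is a walk from `u` to `v` staying inside the vertex set `S`. -/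
def IsWalkIn {V : Type*} (S : Set V) (u v : V) (l : List V) : Prop :=
  l.head? = some u ∧ l.getLast? = some v ∧ ∀ x ∈ l, x ∈ S

/-- Shortest-path distance between `u` and `v` in the subgraph induced on `S`
    of the weighted graph with weights `w` (⊤ if there is no walk). -/
noncomputable def gdist {V : Type*} (w : V → V → ENNReal) (S : Set V) (u v : V) : ENNReal :=
  ⨅ (l : List V) (_ : IsWalkIn S u v l), walkCost w l

open SimpleGraph

attribute [local instance] Classical.propDecidable

namespace CAgg

variable {V : Type*} {ι : Type*}

/-- A context for the cluster-aggregation problem. -/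
structure Ctx (V : Type*) (ι : Type*) [Fintype V] [Nonempty V] where
  T : SimpleGraph V
  hT : T.IsTree
  w : V → V → ENNReal
  hwsymm : ∀ u v, w u v = w v u
  hwE : ∀ u v, ¬ T.Adj u v → w u v = ⊤
  hwE' : ∀ u v, T.Adj u v → w u v < ⊤
  cl : V → ι
  P : Set V
  hP : P.Nonempty
  Δ : ENNReal
  hΔ : Δ < ⊤
  hdiam : ∀ u v : V, cl u = cl v → gdist w {x | cl x = cl v} u v ≤ Δ

variable [Fintype V] [Nonempty V] (C : Ctx V ι)

/-! ### Generic list lemmas -/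

lemma sum_map_le_of_subset {α : Type*} (f : α → ENNReal) :
    ∀ (l₁ : List α), ∀ l₂ : List α, l₁.Nodup → l₁ ⊆ l₂ →
      (l₁.map f).sum ≤ (l₂.map f).sum := by
  intro l₁
  induction l₁ with
  | nil => simp
  | cons a t ih =>
    intro l₂ hnd hsub
    have ha : a ∈ l₂ := hsub List.mem_cons_self
    have hperm : l₂.Perm (a :: l₂.erase a) := List.perm_cons_erase ha
    have h2 : (l₂.map f).sum = f a + ((l₂.erase a).map f).sum := by
      rw [(hperm.map f).sum_eq]; simp
    rw [h2, List.map_cons, List.sum_cons]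
    have hnd' := List.nodup_cons.mp hnd
    refine add_le_add le_rfl (ih _ hnd'.2 ?_)
    intro x hx
    have hne : x ≠ a := fun h => hnd'.1 (by rw [← h]; exact hx)
    exact (List.mem_erase_of_ne hne).mpr (hsub (List.mem_cons_of_mem _ hx))

lemma walkCost_glue (w : V → V → ENNReal) :
    ∀ (l₁ : List V) (l₂ : List V) (z : V), l₁.getLast? = some z →
      walkCost w (l₁ ++ l₂) = walkCost w l₁ + walkCost w (z :: l₂) := by
  intro l₁
  induction l₁ with
  | nil => intro l₂ z h; simp at h
  | cons a t ih =>
    intro l₂ z h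
    cases t with
    | nil =>
      simp only [List.getLast?_singleton, Option.some.injEq] at h
      subst h
      cases l₂ with
      | nil => simp [walkCost]
      | cons b m => simp only [List.cons_append, List.nil_append, walkCost]; simp [walkCost]
    | cons b t' =>
      have hgl : (b :: t').getLast? = some z := by
        rwa [List.getLast?_cons_cons] at h
      have e1 : walkCost w ((a :: b :: t') ++ l₂) = w a b + walkCost w ((b :: t') ++ l₂) := rfl
      have e2 : walkCost w (a :: b :: t') = w a b + walkCost w (b :: t') := rfl
      rw [e1, e2, ih l₂ z hgl, add_assoc]

lemma walkIn_head_eq {S : Set V} {u v : V} {l : List V} (h : IsWalkIn S u v l) :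
    ∃ t, l = u :: t := by
  obtain ⟨h1, _, _⟩ := h
  cases l with
  | nil => simp at h1
  | cons a t => simp at h1; exact ⟨t, by rw [h1]⟩

lemma isWalkIn_glue {S : Set V} {u z v : V} {l₁ l₂ : List V}
    (h₁ : IsWalkIn S u z l₁) (h₂ : IsWalkIn S z v l₂) :
    IsWalkIn S u v (l₁ ++ l₂.tail) ∧
      walkCost C.w (l₁ ++ l₂.tail) = walkCost C.w l₁ + walkCost C.w l₂ := by
  obtain ⟨t₂, rfl⟩ := walkIn_head_eq h₂
  obtain ⟨t₁, rfl⟩ := walkIn_head_eq h₁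
  constructor
  · refine ⟨by simp, ?_, ?_⟩
    · cases t₂ with
      | nil =>
        simp only [List.tail_cons, List.append_nil]
        have : z = v := by have := h₂.2.1; simp at this; exact this
        rw [← this]; exact h₁.2.1
      | cons b m =>
        simp only [List.tail_cons]
        rw [List.getLast?_append_cons]
        have := h₂.2.1
        rwa [List.getLast?_cons_cons] at this
    · intro x hx
      rcases List.mem_append.mp hx with hx | hx
      · exact h₁.2.2 x hx
      · exact h₂.2.2 x (List.mem_cons_of_mem _ hx)
  · have hlast : (u :: t₁).getLast? = some z := h₁.2.1
    simpa using walkCost_glue C.w (u :: t₁) t₂ z hlast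

lemma gdist_le_walkCost {S : Set V} {u v : V} {l : List V} (h : IsWalkIn S u v l) :
    gdist C.w S u v ≤ walkCost C.w l :=
  iInf₂_le l h

lemma gdist_glue {S : Set V} {u z v : V} {l : List V} (h : IsWalkIn S u z l) :
    gdist C.w S u v ≤ walkCost C.w l + gdist C.w S z v := by
  have hrw : walkCost C.w l + gdist C.w S z v
      = ⨅ (m : List V) (_ : IsWalkIn S z v m), (walkCost C.w l + walkCost C.w m) := by
    rw [gdist, ENNReal.add_iInf]
    exact iInf_congr fun m => ENNReal.add_iInf
  rw [hrw]
  refine le_iInf fun m => le_iInf fun hm => ?_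
  obtain ⟨hw, hc⟩ := isWalkIn_glue C h hm
  exact (gdist_le_walkCost C hw).trans (le_of_eq hc)

/-! ### Costs of graph walks -/

/-- Cost of a `SimpleGraph.Walk` wrt the weight `w`. -/
noncomputable def wcost {u v : V} (p : C.T.Walk u v) : ENNReal :=
  (p.darts.map fun d => C.w d.toProd.1 d.toProd.2).sum

@[simp] lemma wcost_nil {u : V} : wcost C (Walk.nil : C.T.Walk u u) = 0 := by
  simp [wcost]

@[simp] lemma wcost_cons {u v x : V} (h : C.T.Adj u x) (p : C.T.Walk x v) :
    wcost C (Walk.cons h p) = C.w u x + wcost C p := by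
  simp [wcost]

lemma wcost_append {u v x : V} (p : C.T.Walk u x) (q : C.T.Walk x v) :
    wcost C (p.append q) = wcost C p + wcost C q := by
  simp [wcost, Walk.darts_append]

lemma walkCost_support {u v : V} (p : C.T.Walk u v) :
    walkCost C.w p.support = wcost C p := by
  induction p with
  | nil => simp [walkCost]
  | cons h p ih =>
    rename_i a b c
    rw [Walk.support_cons, wcost_cons]
    rw [p.support_eq_cons] at ih ⊢
    calc walkCost C.w (a :: b :: p.support.tail)
        = C.w a b + walkCost C.w (b :: p.support.tail) := rfl
      _ = C.w a b + wcost C p := by rw [ih]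

lemma wcost_lt_top {u v : V} (p : C.T.Walk u v) : wcost C p < ⊤ := by
  induction p with
  | nil => simp
  | cons h p ih =>
    rw [wcost_cons]
    exact ENNReal.add_lt_top.mpr ⟨C.hwE' _ _ h, ih⟩

/-! ### Tree paths -/

noncomputable def pathB (u v : V) : C.T.Walk u v :=
  (C.hT.existsUnique_path u v).choose

lemma pathB_isPath (u v : V) : (pathB C u v).IsPath :=
  (C.hT.existsUnique_path u v).choose_spec.1

lemma pathB_eq {u v : V} (p : C.T.Walk u v) (hp : p.IsPath) : p = pathB C u v :=
  (C.hT.existsUnique_path u v).choose_spec.2 p hp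

noncomputable def dist (u v : V) : ENNReal := wcost C (pathB C u v)

lemma dist_self (u : V) : dist C u u = 0 := by
  have h : (Walk.nil : C.T.Walk u u) = pathB C u u := pathB_eq C _ (by simp)
  rw [dist, ← h, wcost_nil]

lemma dist_le_wcost {u v : V} (p : C.T.Walk u v) : dist C u v ≤ wcost C p := by
  have hb := p.bypass_isPath
  have he : pathB C u v = p.bypass := (pathB_eq C _ hb).symm
  rw [dist, he, wcost, wcost]
  exact sum_map_le_of_subset _ _ _
    (Walk.darts_nodup_of_support_nodup hb.support_nodup) p.darts_bypass_subset

lemma dist_triangle (u x v : V) : dist C u v ≤ dist C u x + dist C x v := by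
  have h := dist_le_wcost C ((pathB C u x).append (pathB C x v))
  rwa [wcost_append] at h

lemma dist_adj {u v : V} (h : C.T.Adj u v) : dist C u v = C.w u v := by
  have hp : (Walk.cons h Walk.nil : C.T.Walk u v).IsPath := by simp [h.ne]
  rw [dist, ← pathB_eq C _ hp, wcost_cons, wcost_nil, add_zero]

lemma dist_lt_top (u v : V) : dist C u v < ⊤ := wcost_lt_top C _

lemma dist_comm (u v : V) : dist C u v = dist C v u := by
  have hp : (pathB C u v).reverse.IsPath := (pathB_isPath C u v).reverse
  rw [dist, dist, ← pathB_eq C _ hp, wcost, wcost, Walk.darts_reverse, List.map_reverse,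
    List.sum_reverse, List.map_map]
  congr 1
  refine List.map_congr_left fun d _ => ?_
  exact (C.hwsymm _ _).symm

lemma pathB_split {u v z : V} (hz : z ∈ (pathB C u v).support) :
    pathB C u v = (pathB C u z).append (pathB C z v) ∧
      dist C u v = dist C u z + dist C z v := by
  have h1 : (pathB C u v).takeUntil z hz = pathB C u z :=
    pathB_eq C _ ((pathB_isPath C u v).takeUntil hz)
  have h2 : (pathB C u v).dropUntil z hz = pathB C z v :=
    pathB_eq C _ ((pathB_isPath C u v).dropUntil hz)
  have h3 := (pathB C u v).take_spec hz
  rw [h1, h2] at h3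
  refine ⟨h3.symm, ?_⟩
  rw [dist, ← h3, wcost_append]; rfl

lemma dist_le_walkCost {S : Set V} : ∀ (l : List V) (u v : V), IsWalkIn S u v l →
    dist C u v ≤ walkCost C.w l := by
  intro l
  induction l with
  | nil => intro u v h; simp [IsWalkIn] at h
  | cons a t ih =>
    intro u v h
    have hu : a = u := by have := h.1; simp at this; exact this
    subst hu
    cases t with
    | nil =>
      have hv : a = v := by have := h.2.1; simp at this; exact this
      subst hv
      rw [dist_self]; exact zero_le
    | cons b t' =>
      have hwalk : IsWalkIn S b v (b :: t') := by
        refine ⟨rfl, ?_, fun x hx => h.2.2 x (List.mem_cons_of_mem _ hx)⟩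
        have := h.2.1; rwa [List.getLast?_cons_cons] at this
      by_cases hadj : C.T.Adj a b
      · calc dist C a v ≤ dist C a b + dist C b v := dist_triangle C a b v
          _ ≤ C.w a b + walkCost C.w (b :: t') :=
              add_le_add (le_of_eq (dist_adj C hadj)) (ih _ _ hwalk)
          _ = walkCost C.w (a :: b :: t') := rfl
      · have htop : walkCost C.w (a :: b :: t') = ⊤ := by
          have : walkCost C.w (a :: b :: t') = C.w a b + walkCost C.w (b :: t') := rfl
          rw [this, C.hwE _ _ hadj, top_add]
        rw [htop]; exact le_top

lemma dist_le_gdist (S : Set V) (u v : V) : dist C u v ≤ gdist C.w S u v :=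
  le_iInf fun l => le_iInf fun h => dist_le_walkCost C l u v h

lemma isWalkIn_support {S : Set V} {u v : V} (p : C.T.Walk u v)
    (h : ∀ z ∈ p.support, z ∈ S) : IsWalkIn S u v p.support := by
  refine ⟨?_, ?_, h⟩
  · rw [p.support_eq_cons]; rfl
  · rw [List.getLast?_eq_getLast p.support_ne_nil, p.getLast_support]

lemma gdist_le_wcost {S : Set V} {u v : V} (p : C.T.Walk u v)
    (h : ∀ z ∈ p.support, z ∈ S) : gdist C.w S u v ≤ wcost C p := by
  rw [← walkCost_support]
  exact gdist_le_walkCost C (isWalkIn_support C p h)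

lemma append_left_cancel {u v x : V} {p : C.T.Walk u v} {q r : C.T.Walk v x}
    (h : p.append q = p.append r) : q = r := by
  induction p with
  | nil => simpa using h
  | cons ha p ih =>
    rw [Walk.cons_append, Walk.cons_append] at h
    simp only [Walk.cons.injEq, heq_eq_eq, true_and] at h
    exact ih h

/-! ### Rooting the tree -/

noncomputable def rho : V := C.hP.some

lemma rho_mem : rho C ∈ C.P := C.hP.some_mem

noncomputable def depth (v : V) : ℕ := (pathB C v (rho C)).length

lemma depth_lt_card (v : V) : depth C v < Fintype.card V :=
  (pathB_isPath C v (rho C)).length_lt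

def anc (z v : V) : Prop := z ∈ (pathB C v (rho C)).support

lemma anc_refl (v : V) : anc C v v := Walk.start_mem_support _

lemma anc_rho (v : V) : anc C (rho C) v := Walk.end_mem_support _

lemma depth_anc_split {z v : V} (h : anc C z v) :
    depth C v = (pathB C v z).length + depth C z := by
  rw [depth, (pathB_split C h).1, Walk.length_append]; rfl

lemma anc_depth_le {z v : V} (h : anc C z v) : depth C z ≤ depth C v := by
  rw [depth_anc_split C h]; omega

lemma anc_eq_of_depth_le {z v : V} (h : anc C z v) (hd : depth C v ≤ depth C z) : z = v := by
  have h1 := depth_anc_split C h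
  have hlen : (pathB C v z).length = 0 := by omega
  exact (Walk.eq_of_length_eq_zero hlen).symm

lemma anc_trans {y z v : V} (h1 : anc C z v) (h2 : anc C y z) : anc C y v := by
  rw [anc, (pathB_split C h1).1]
  exact (Walk.mem_support_append_iff _ _).mpr (Or.inr h2)

lemma pathB_comp {v z y : V} (h1 : anc C z v) (h2 : anc C y z) :
    pathB C v y = (pathB C v z).append (pathB C z y) ∧
      dist C v y = dist C v z + dist C z y := by
  have hA : pathB C v (rho C) =
      ((pathB C v z).append (pathB C z y)).append (pathB C y (rho C)) := by
    rw [(pathB_split C h1).1, (pathB_split C h2).1, Walk.append_assoc]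
  have hpre : ((pathB C v z).append (pathB C z y)).IsPath := by
    apply Walk.IsPath.of_append_left (q := pathB C y (rho C))
    rw [← hA]; exact pathB_isPath C v (rho C)
  have he := pathB_eq C _ hpre
  refine ⟨he.symm, ?_⟩
  rw [dist, ← he, wcost_append]; rfl

lemma anc_total {z₁ z₂ v : V} (h1 : anc C z₁ v) (h2 : anc C z₂ v) :
    anc C z₁ z₂ ∨ anc C z₂ z₁ := by
  have h2' := h2
  rw [anc, (pathB_split C h1).1] at h2'
  rcases (Walk.mem_support_append_iff _ _).mp h2' with h | h
  · left
    -- z₂ lies on the path from v down to z₁ : z₁ is an ancestor of z₂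
    have hsp := (pathB_split C h).1
    have hA : pathB C v (rho C) =
        (pathB C v z₂).append ((pathB C z₂ z₁).append (pathB C z₁ (rho C))) := by
      rw [(pathB_split C h1).1, hsp, Walk.append_assoc]
    have hB := (pathB_split C h2).1
    rw [hB] at hA
    have := append_left_cancel C hA
    rw [anc, this]
    exact (Walk.mem_support_append_iff _ _).mpr (Or.inr (anc_refl C z₁))
  · right; exact h

/-! ### Parents -/

noncomputable def parent (v : V) : V := (pathB C v (rho C)).getVert 1

lemma parent_spec {v : V} (hv : v ≠ rho C) :
    ∃ h : C.T.Adj v (parent C v),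
      pathB C v (rho C) = Walk.cons h (pathB C (parent C v) (rho C)) := by
  rcases hp : pathB C v (rho C) with _ | ⟨h, q⟩
  · exact absurd rfl hv
  · rename_i x
    have hx : parent C v = x := by
      rw [parent, hp, Walk.getVert_cons_succ, Walk.getVert_zero]
    have hq : q = pathB C x (rho C) := by
      apply pathB_eq
      have hP := pathB_isPath C v (rho C); rw [hp] at hP; exact hP.of_cons
    rw [hx]
    exact ⟨h, by rw [hq]⟩

lemma parent_rho : parent C (rho C) = rho C := by
  have h : (Walk.nil : C.T.Walk (rho C) (rho C)) = pathB C (rho C) (rho C) :=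
    pathB_eq C _ (by simp)
  rw [parent, ← h]; rfl

lemma adj_parent_self {v : V} (hv : v ≠ rho C) : C.T.Adj v (parent C v) :=
  (parent_spec C hv).choose

lemma depth_parent {v : V} (hv : v ≠ rho C) : depth C v = depth C (parent C v) + 1 := by
  obtain ⟨h, hp⟩ := parent_spec C hv
  rw [depth, hp, Walk.length_cons]; rfl

lemma support_parent {v : V} (hv : v ≠ rho C) :
    (pathB C v (rho C)).support = v :: (pathB C (parent C v) (rho C)).support := by
  obtain ⟨h, hp⟩ := parent_spec C hv
  rw [hp, Walk.support_cons]

lemma depth_eq_zero {v : V} (h : depth C v = 0) : v = rho C :=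
  Walk.eq_of_length_eq_zero h

lemma adj_parent {u c : V} (h : C.T.Adj u c) : parent C c = u ∨ parent C u = c := by
  by_cases hmem : u ∈ (pathB C c (rho C)).support
  · left
    have h1 := (pathB_split C hmem).1
    have h2 : (Walk.cons h.symm Walk.nil : C.T.Walk c u) = pathB C c u :=
      pathB_eq C _ (by simp [h.symm.ne])
    rw [← h2, Walk.cons_append, Walk.nil_append] at h1
    rw [parent, h1, Walk.getVert_cons_succ, Walk.getVert_zero]
  · right
    have hp : (Walk.cons h (pathB C c (rho C))).IsPath :=
      (pathB_isPath C c _).cons hmem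
    have he := pathB_eq C _ hp
    rw [parent, ← he, Walk.getVert_cons_succ, Walk.getVert_zero]

lemma step_or_anc : ∀ n {u x : V}, (pathB C u x).length = n → u ≠ x →
    anc C u x ∨ ∃ h : C.T.Adj u (parent C u),
      pathB C u x = Walk.cons h (pathB C (parent C u) x) := by
  intro n
  induction n using Nat.strong_induction_on with
  | _ n ih =>
    intro u x hlen hne
    rcases hp : pathB C u x with _ | ⟨h, q⟩
    · exact absurd rfl hne
    · rename_i c
      have hq : q = pathB C c x := by
        apply pathB_eq
        have hP := pathB_isPath C u x; rw [hp] at hP; exact hP.of_cons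
      rcases adj_parent C h with hpc | hpu
      · -- parent c = u : the path starts by going down; show u is an ancestor of x
        have hcrho : c ≠ rho C := by
          intro hc; exact h.ne (by rw [← hpc, hc]; exact parent_rho C)
        have hanc_uc : anc C u c := by
          rw [anc, support_parent C hcrho, hpc]
          exact List.mem_cons_of_mem _ (Walk.start_mem_support _)
        by_cases hcx : c = x
        · subst hcx; exact Or.inl hanc_uc
        · have hlq : (pathB C c x).length < n := by
            rw [← hq]
            have : (Walk.cons h q).length = q.length + 1 := Walk.length_cons _ _
            rw [hp] at hlen; omega
          rcases ih _ hlq rfl hcx with hanc | ⟨h2, hcons⟩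
          · exact Or.inl (anc_trans C hanc hanc_uc)
          · exfalso
            have hmem : u ∈ (pathB C c x).support := by
              rw [hcons, Walk.support_cons, hpc]
              exact List.mem_cons_of_mem _ (Walk.start_mem_support _)
            have hP := pathB_isPath C u x
            rw [hp, Walk.cons_isPath_iff] at hP
            rw [← hq] at hmem
            exact hP.2 hmem
      · right
        rw [hpu]
        exact ⟨h, by rw [hq]⟩

lemma anc_parent {v : V} (hv : v ≠ rho C) : anc C (parent C v) v := by
  rw [anc, support_parent C hv]
  exact List.mem_cons_of_mem _ (Walk.start_mem_support _)

lemma anc_antisymm {z v : V} (h1 : anc C z v) (h2 : anc C v z) : z = v :=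
  anc_eq_of_depth_le C h1 (anc_depth_le C h2)

lemma pathB_reverse (u v : V) : pathB C u v = (pathB C v u).reverse :=
  (pathB_eq C _ ((pathB_isPath C v u).reverse)).symm

/-! ### Distance to the portal set -/

noncomputable def Pfin : Finset V := (Set.toFinite C.P).toFinset

lemma mem_Pfin {p : V} : p ∈ Pfin C ↔ p ∈ C.P := Set.Finite.mem_toFinset _

lemma Pfin_nonempty : (Pfin C).Nonempty := by
  obtain ⟨p, hp⟩ := C.hP; exact ⟨p, (mem_Pfin C).mpr hp⟩

noncomputable def d (v : V) : ENNReal :=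
  (Pfin C).inf' (Pfin_nonempty C) (fun p => dist C v p)

lemma d_le {v p : V} (hp : p ∈ C.P) : d C v ≤ dist C v p :=
  Finset.inf'_le _ ((mem_Pfin C).mpr hp)

lemma d_exists (v : V) : ∃ p ∈ C.P, d C v = dist C v p := by
  obtain ⟨p, hp, he⟩ := Finset.exists_mem_eq_inf' (Pfin_nonempty C) (fun p => dist C v p)
  exact ⟨p, (mem_Pfin C).mp hp, he⟩

lemma d_lt_top (v : V) : d C v < ⊤ := by
  obtain ⟨p, hp, he⟩ := d_exists C v; rw [he]; exact dist_lt_top C v p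

lemma d_triangle (v u : V) : d C v ≤ dist C v u + d C u := by
  obtain ⟨p, hp, he⟩ := d_exists C u
  calc d C v ≤ dist C v p := d_le C hp
    _ ≤ dist C v u + dist C u p := dist_triangle C v u p
    _ = dist C v u + d C u := by rw [he]

/-- `v` has a nearest portal inside its own subtree. -/
def down (v : V) : Prop := ∃ q ∈ C.P, anc C v q ∧ dist C v q = d C v

lemma down_rho : down C (rho C) := by
  refine ⟨rho C, rho_mem C, anc_refl C _, ?_⟩
  have h1 : d C (rho C) ≤ dist C (rho C) (rho C) := d_le C (rho_mem C)
  rw [dist_self] at h1 ⊢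
  exact (le_antisymm h1 zero_le).symm

lemma ne_rho_of_not_down {v : V} (h : ¬ down C v) : v ≠ rho C :=
  fun he => h (he ▸ down_rho C)

lemma notDown_step {v : V} (h : ¬ down C v) :
    d C v = C.w v (parent C v) + d C (parent C v) := by
  have hv : v ≠ rho C := ne_rho_of_not_down C h
  obtain ⟨q, hq, he⟩ := d_exists C v
  have hvq : v ≠ q := by
    intro hvq; subst hvq
    exact h ⟨v, hq, anc_refl C v, he.symm⟩
  rcases step_or_anc C _ rfl hvq with hanc | ⟨hadj, hcons⟩
  · exact absurd ⟨q, hq, hanc, he.symm⟩ h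
  · apply le_antisymm
    · calc d C v ≤ dist C v (parent C v) + d C (parent C v) := d_triangle C v _
        _ = C.w v (parent C v) + d C (parent C v) := by
            rw [dist_adj C (adj_parent_self C hv)]
    · have hd : dist C v q = C.w v (parent C v) + dist C (parent C v) q := by
        rw [dist, hcons, wcost_cons]; rfl
      calc C.w v (parent C v) + d C (parent C v)
          ≤ C.w v (parent C v) + dist C (parent C v) q := add_le_add le_rfl (d_le C hq)
        _ = dist C v q := hd.symm
        _ = d C v := he.symm

/-- The nearest `down` ancestor. -/
noncomputable def Adown (v : V) : V :=
  if down C v then v else Adown (parent C v)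
termination_by depth C v
decreasing_by
  rename_i h
  have hv := ne_rho_of_not_down C h
  have := depth_parent C hv
  omega

lemma Adown_spec : ∀ n (v : V), depth C v = n → down C (Adown C v) ∧ anc C (Adown C v) v ∧
    d C v = dist C v (Adown C v) + d C (Adown C v) := by
  intro n
  induction n using Nat.strong_induction_on with
  | _ n ih =>
    intro v hn
    by_cases h : down C v
    · rw [Adown, if_pos h]
      exact ⟨h, anc_refl C v, by rw [dist_self, zero_add]⟩
    · have hv := ne_rho_of_not_down C h
      have hd := depth_parent C hv
      have hrec := ih (depth C (parent C v)) (by omega) (parent C v) rfl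
      have hAd : Adown C v = Adown C (parent C v) := by rw [Adown, if_neg h]
      refine ⟨hAd ▸ hrec.1, ?_, ?_⟩
      · rw [hAd]
        exact anc_trans C (anc_parent C hv) hrec.2.1
      · have hsplit : dist C v (Adown C (parent C v)) =
            dist C v (parent C v) + dist C (parent C v) (Adown C (parent C v)) :=
          (pathB_comp C (anc_parent C hv) hrec.2.1).2
      
        rw [hAd, notDown_step C h, hrec.2.2, hsplit, dist_adj C (adj_parent_self C hv),
          add_assoc]

lemma Adown_down (v : V) : down C (Adown C v) := (Adown_spec C _ v rfl).1
lemma Adown_anc (v : V) : anc C (Adown C v) v := (Adown_spec C _ v rfl).2.1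
lemma Adown_dist (v : V) : d C v = dist C v (Adown C v) + d C (Adown C v) :=
  (Adown_spec C _ v rfl).2.2

lemma Adown_on_line : ∀ n (v z : V), depth C v = n → anc C z v → anc C (Adown C v) z →
    Adown C z = Adown C v := by
  intro n
  induction n using Nat.strong_induction_on with
  | _ n ih =>
    intro v z hn h1 h2
    by_cases h : down C v
    · have hAv : Adown C v = v := by rw [Adown, if_pos h]
      rw [hAv] at h2
      rw [anc_antisymm C h1 h2, hAv]
    · have hv := ne_rho_of_not_down C h
      have hd := depth_parent C hv
      have hAd : Adown C v = Adown C (parent C v) := by rw [Adown, if_neg h]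
      by_cases hzv : z = v
      · subst hzv; rfl
      · have hz : anc C z (parent C v) := by
          have := h1
          rw [anc, support_parent C hv] at this
          rcases List.mem_cons.mp this with h' | h'
          · exact absurd h' hzv
          · exact h'
        rw [hAd]
        exact ih (depth C (parent C v)) (by omega) (parent C v) z rfl hz (hAd ▸ h2)

/-! ### Clusters -/

noncomputable def Scl (v : V) : Finset V :=
  Finset.univ.filter (fun x => C.cl x = C.cl v)

lemma mem_Scl {x v : V} : x ∈ Scl C v ↔ C.cl x = C.cl v := by simp [Scl]

lemma self_mem_Scl (v : V) : v ∈ Scl C v := by simp [Scl]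

lemma Scl_nonempty (v : V) : (Scl C v).Nonempty := ⟨v, self_mem_Scl C v⟩

lemma Scl_eq_of_mem {x v : V} (h : x ∈ Scl C v) : Scl C x = Scl C v := by
  rw [mem_Scl] at h
  ext y; rw [mem_Scl, mem_Scl, h]

lemma dist_le_delta {x y : V} (h : C.cl x = C.cl y) : dist C x y ≤ C.Δ :=
  (dist_le_gdist C _ x y).trans (C.hdiam x y h)

lemma walk_of_list {S : Set V} : ∀ (l : List V) (u v : V), IsWalkIn S u v l →
    walkCost C.w l ≠ ⊤ → ∃ p : C.T.Walk u v, ∀ z ∈ p.support, z ∈ l := by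
  intro l
  induction l with
  | nil => intro u v h; simp [IsWalkIn] at h
  | cons a t ih =>
    intro u v h hcost
    have hu : a = u := by have := h.1; simp at this; exact this
    subst hu
    cases t with
    | nil =>
      have hv : a = v := by have := h.2.1; simp at this; exact this
      subst hv
      exact ⟨Walk.nil, by simp⟩
    | cons b t' =>
      have hwalk : IsWalkIn S b v (b :: t') := by
        refine ⟨rfl, ?_, fun x hx => h.2.2 x (List.mem_cons_of_mem _ hx)⟩
        have := h.2.1; rwa [List.getLast?_cons_cons] at this
      have hsplit : walkCost C.w (a :: b :: t') = C.w a b + walkCost C.w (b :: t') := rfl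
      have hadj : C.T.Adj a b := by
        by_contra hne
        rw [hsplit, C.hwE _ _ hne, top_add] at hcost
        exact hcost rfl
      have hc2 : walkCost C.w (b :: t') ≠ ⊤ := by
        intro hh; rw [hsplit, hh, add_top] at hcost; exact hcost rfl
      obtain ⟨p, hp⟩ := ih b v hwalk hc2
      refine ⟨Walk.cons hadj p, ?_⟩
      intro z hz
      rw [Walk.support_cons] at hz
      rcases List.mem_cons.mp hz with rfl | hz
      · exact List.mem_cons_self
      · exact List.mem_cons_of_mem _ (hp z hz)

lemma support_in_cluster {x y : V} (h : C.cl x = C.cl y) :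
    ∀ z ∈ (pathB C x y).support, C.cl z = C.cl y := by
  have hfin : gdist C.w {a | C.cl a = C.cl y} x y < ⊤ :=
    lt_of_le_of_lt (C.hdiam x y h) C.hΔ
  rw [gdist] at hfin
  obtain ⟨l, hl⟩ := iInf_lt_iff.mp hfin
  obtain ⟨hwalk, hcost⟩ := iInf_lt_iff.mp hl
  obtain ⟨p, hp⟩ := walk_of_list C l x y hwalk (ne_top_of_lt hcost)
  have hb := p.bypass_isPath
  have he : pathB C x y = p.bypass := (pathB_eq C _ hb).symm
  intro z hz
  rw [he] at hz
  exact hwalk.2.2 z (hp z (p.support_bypass_subset hz))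

/-! ### Tops of clusters -/

noncomputable def minD (A : Finset V) : V :=
  if h : A.Nonempty then (Finset.exists_min_image A (depth C) h).choose else rho C

lemma minD_mem {A : Finset V} (h : A.Nonempty) : minD C A ∈ A := by
  rw [minD, dif_pos h]
  exact (Finset.exists_min_image A (depth C) h).choose_spec.1

lemma minD_min {A : Finset V} (h : A.Nonempty) {x : V} (hx : x ∈ A) :
    depth C (minD C A) ≤ depth C x := by
  rw [minD, dif_pos h]
  exact (Finset.exists_min_image A (depth C) h).choose_spec.2 x hx

lemma top_anc' {v : V} : ∀ n (x : V), (pathB C x (minD C (Scl C v))).length = n →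
    x ∈ Scl C v → anc C (minD C (Scl C v)) x := by
  have htmem : minD C (Scl C v) ∈ Scl C v := minD_mem C (Scl_nonempty C v)
  intro n
  induction n using Nat.strong_induction_on with
  | _ n ih =>
    intro x hlen hx
    by_cases hxt : x = minD C (Scl C v)
    · rw [hxt]; exact anc_refl C _
    · have hclxt : C.cl x = C.cl (minD C (Scl C v)) := by
        rw [(mem_Scl C).mp hx, (mem_Scl C).mp htmem]
      rcases hp : pathB C x (minD C (Scl C v)) with _ | ⟨h, q⟩
      · exact absurd rfl hxt
      · rename_i c
        have hq : q = pathB C c (minD C (Scl C v)) := by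
          apply pathB_eq
          have hP := pathB_isPath C x (minD C (Scl C v)); rw [hp] at hP; exact hP.of_cons
        have hcmem : c ∈ Scl C v := by
          have hcsupp : c ∈ (pathB C x (minD C (Scl C v))).support := by
            rw [hp, Walk.support_cons]
            exact List.mem_cons_of_mem _ (Walk.start_mem_support _)
          have := support_in_cluster C hclxt c hcsupp
          rw [mem_Scl, this, (mem_Scl C).mp htmem]
        have hlq : (pathB C c (minD C (Scl C v))).length < n := by
          rw [← hq]
          have hl2 : q.length + 1 = n := by rw [← hlen, hp]; rfl
          omega
        have hanc_tc : anc C (minD C (Scl C v)) c := ih _ hlq c rfl hcmem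
        rcases adj_parent C h with hpc | hpu
        · -- parent c = x : c above x?? no: parent c = x means x is c's parent
          have hcrho : c ≠ rho C := by
            intro hc; exact h.ne (by rw [← hpc, hc]; exact parent_rho C)
          -- support of pathB c rho = c :: support of pathB x rho
          have hsupp := support_parent C hcrho
          rw [hpc] at hsupp
          have htc := hanc_tc
          rw [anc, hsupp] at htc
          rcases List.mem_cons.mp htc with h' | h'
          · -- minD = c: depth contradiction
            exfalso
            have hd1 : depth C (minD C (Scl C v)) ≤ depth C x := minD_min C (Scl_nonempty C v) hx
            have hd2 : depth C c = depth C x + 1 := by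
              rw [depth_parent C hcrho, hpc]
            rw [h'] at hd1
            omega
          · exact h'
        · -- parent x = c
          have hxrho : x ≠ rho C := by
            intro hc; exact h.ne (by rw [← hpu, hc]; exact (parent_rho C).symm)
          refine anc_trans C ?_ hanc_tc
          rw [← hpu]
          exact anc_parent C hxrho

/-! ### Descending paths -/

lemma desc_split {y q z : V} (hyq : anc C y q) (hz : z ∈ (pathB C y q).support) :
    anc C y z ∧ anc C z q ∧ dist C y q = dist C y z + dist C z q := by
  have hdist := (pathB_split C hz).2
  have hz' : z ∈ (pathB C q y).support := by
    rw [pathB_reverse C q y, Walk.support_reverse, List.mem_reverse]; exact hz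
  have hanczq : anc C z q := by
    rw [anc, (pathB_split C hyq).1]
    exact (Walk.mem_support_append_iff _ _).mpr (Or.inl hz')
  refine ⟨?_, hanczq, hdist⟩
  have hA : pathB C q (rho C) = (pathB C q z).append (pathB C z (rho C)) :=
    (pathB_split C hanczq).1
  have hB : pathB C q y = (pathB C q z).append (pathB C z y) := (pathB_split C hz').1
  have hCC : pathB C q (rho C) =
      (pathB C q z).append ((pathB C z y).append (pathB C y (rho C))) := by
    rw [(pathB_split C hyq).1, hB, Walk.append_assoc]
  rw [hA] at hCC
  have hcan := append_left_cancel C hCC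
  rw [anc, hcan]
  exact (Walk.mem_support_append_iff _ _).mpr (Or.inr (anc_refl C y))

lemma down_inherit {y q z : V} (hq : q ∈ C.P) (hanc : anc C y q) (hdq : dist C y q = d C y)
    (hz : z ∈ (pathB C y q).support) :
    anc C z q ∧ dist C z q = d C z ∧ down C z ∧ dist C y z + d C z = d C y := by
  obtain ⟨hyz, hzq, hsum⟩ := desc_split C hanc hz
  have h1 : d C z ≤ dist C z q := d_le C hq
  have h2 : d C y ≤ dist C y z + d C z := d_triangle C y z
  have h3 : dist C y z + dist C z q ≤ dist C y z + d C z := by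
    rw [← hsum, hdq]; exact h2
  have h4 : dist C z q ≤ d C z :=
    (ENNReal.add_le_add_iff_left (dist_lt_top C y z).ne).mp h3
  have h5 : dist C z q = d C z := le_antisymm h4 h1
  exact ⟨hzq, h5, ⟨q, hq, hzq, h5⟩, by rw [← h5, ← hsum, hdq]⟩

/-! ### The assignment data -/

noncomputable def DwnF (A : Finset V) : Finset V := A.filter (fun y => down C y)

lemma mem_DwnF {A : Finset V} {y : V} : y ∈ DwnF C A ↔ y ∈ A ∧ down C y := by simp [DwnF]

noncomputable def nuv (A : Finset V) : ENNReal :=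
  if h : (DwnF C A).Nonempty then
    (DwnF C A).inf' h (fun y => dist C (minD C A) y + d C y) else ⊤

noncomputable def yStar (A : Finset V) : V :=
  if h : (DwnF C A).Nonempty then
    (Finset.exists_mem_eq_inf' h (fun y => dist C (minD C A) y + d C y)).choose else rho C

lemma yStar_spec {A : Finset V} (h : (DwnF C A).Nonempty) :
    yStar C A ∈ DwnF C A ∧ nuv C A = dist C (minD C A) (yStar C A) + d C (yStar C A) := by
  rw [yStar, dif_pos h, nuv, dif_pos h]
  exact (Finset.exists_mem_eq_inf' h (fun y => dist C (minD C A) y + d C y)).choose_spec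

lemma nuv_le {A : Finset V} {y : V} (hy : y ∈ A) (hdy : down C y) :
    nuv C A ≤ dist C (minD C A) y + d C y := by
  have hne : (DwnF C A).Nonempty := ⟨y, (mem_DwnF C).mpr ⟨hy, hdy⟩⟩
  rw [nuv, dif_pos hne]
  exact Finset.inf'_le _ ((mem_DwnF C).mpr ⟨hy, hdy⟩)

def grounded (A : Finset V) : Prop := nuv C A ≤ d C (minD C A) + 2 * C.Δ

lemma twoDelta_lt_top : (2 : ENNReal) * C.Δ < ⊤ :=
  ENNReal.mul_lt_top (by norm_num) C.hΔ

lemma DwnF_nonempty_of_grounded {A : Finset V} (h : grounded C A) : (DwnF C A).Nonempty := by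
  by_contra hne
  rw [grounded, nuv, dif_neg hne] at h
  have hlt : d C (minD C A) + 2 * C.Δ < ⊤ :=
    ENNReal.add_lt_top.mpr ⟨d_lt_top C _, twoDelta_lt_top C⟩
  exact absurd (top_le_iff.mp h) hlt.ne

lemma grounded_of_top_down {A : Finset V} (hne : A.Nonempty) (h : down C (minD C A)) :
    grounded C A := by
  rw [grounded]
  calc nuv C A ≤ dist C (minD C A) (minD C A) + d C (minD C A) := nuv_le C (minD_mem C hne) h
    _ = d C (minD C A) := by rw [dist_self, zero_add]
    _ ≤ d C (minD C A) + 2 * C.Δ := le_self_add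

noncomputable def qWit (y : V) : V := if h : down C y then h.choose else rho C

lemma qWit_spec {y : V} (h : down C y) :
    qWit C y ∈ C.P ∧ anc C y (qWit C y) ∧ dist C y (qWit C y) = d C y := by
  rw [qWit, dif_pos h]; exact h.choose_spec

/-! ### First exit of a walk from a set -/

noncomputable def firstExit (A : Finset V) :
    {a b : V} → (p : C.T.Walk a b) → a ∈ A → b ∉ A →
      Σ' (x : V) (pre : C.T.Walk a x), (x ∉ A) ∧
        (∀ z ∈ pre.support, z ≠ x → z ∈ A) ∧ ∃ suf : C.T.Walk x b, pre.append suf = p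
  | _, _, Walk.nil, ha, hb => absurd ha hb
  | _, _, @SimpleGraph.Walk.cons _ _ a c b h p, ha, hb =>
    if hc : c ∈ A then
      let r := firstExit A p hc hb
      ⟨r.1, Walk.cons h r.2.1, r.2.2.1, by
          intro z hz hne
          rw [Walk.support_cons] at hz
          rcases List.mem_cons.mp hz with rfl | hz
          · exact ha
          · exact r.2.2.2.1 z hz hne,
        ⟨r.2.2.2.2.choose, by rw [Walk.cons_append, r.2.2.2.2.choose_spec]⟩⟩
    else
      ⟨c, Walk.cons h Walk.nil, hc, by
          intro z hz hne
          rw [Walk.support_cons] at hz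
          rcases List.mem_cons.mp hz with rfl | hz
          · exact ha
          · simp at hz; exact absurd hz hne,
        ⟨p, by rw [Walk.cons_append, Walk.nil_append]⟩⟩

noncomputable def x1A (A : Finset V) : V :=
  if h : yStar C A ∈ A ∧ qWit C (yStar C A) ∉ A then
    (firstExit C A (pathB C (yStar C A) (qWit C (yStar C A))) h.1 h.2).1
  else rho C

noncomputable def x1 (v : V) : V := x1A C (Scl C v)

lemma x1_spec {v : V} (hy : yStar C (Scl C v) ∈ Scl C v)
    (hq : qWit C (yStar C (Scl C v)) ∉ Scl C v) :
    x1 C v ∉ Scl C v ∧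
    x1 C v ∈ (pathB C (yStar C (Scl C v)) (qWit C (yStar C (Scl C v)))).support ∧
    (∀ z ∈ (pathB C (yStar C (Scl C v)) (x1 C v)).support, z ≠ x1 C v → z ∈ Scl C v) := by
  have hcond : yStar C (Scl C v) ∈ Scl C v ∧ qWit C (yStar C (Scl C v)) ∉ Scl C v := ⟨hy, hq⟩
  rw [x1, x1A, dif_pos hcond]
  set r := firstExit C (Scl C v)
      (pathB C (yStar C (Scl C v)) (qWit C (yStar C (Scl C v)))) hcond.1 hcond.2 with hr
  obtain ⟨suf, hsuf⟩ := r.2.2.2.2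
  have hpre_path : r.2.1.IsPath := by
    apply Walk.IsPath.of_append_left (q := suf)
    rw [hsuf]; exact pathB_isPath C _ _
  have hpre_eq : r.2.1 = pathB C (yStar C (Scl C v)) r.1 := pathB_eq C _ hpre_path
  refine ⟨r.2.2.1, ?_, ?_⟩
  · have hmem : r.1 ∈ (r.2.1.append suf).support :=
      (Walk.mem_support_append_iff _ _).mpr (Or.inl (Walk.end_mem_support _))
    rw [hsuf] at hmem
    exact hmem
  · rw [← hpre_eq]
    exact r.2.2.2.1

lemma x1_dist {v : V} (hy : yStar C (Scl C v) ∈ Scl C v)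
    (hq : qWit C (yStar C (Scl C v)) ∉ Scl C v) :
    dist C (yStar C (Scl C v)) (qWit C (yStar C (Scl C v)))
      = dist C (yStar C (Scl C v)) (x1 C v)
        + dist C (x1 C v) (qWit C (yStar C (Scl C v))) :=
  (pathB_split C (x1_spec C hy hq).2.1).2

lemma yStar_props {v : V} (hg : grounded C (Scl C v)) :
    yStar C (Scl C v) ∈ Scl C v ∧ down C (yStar C (Scl C v)) := by
  have h := (yStar_spec C (DwnF_nonempty_of_grounded C hg)).1
  rw [mem_DwnF] at h
  exact h

/-- All key properties of the exit vertex. -/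
lemma x1_props {v : V} (hg : grounded C (Scl C v))
    (hq : qWit C (yStar C (Scl C v)) ∉ Scl C v) :
    x1 C v ∉ Scl C v ∧ down C (x1 C v) ∧ x1 C v = minD C (Scl C (x1 C v)) ∧
    grounded C (Scl C (x1 C v)) ∧
    depth C (minD C (Scl C v)) < depth C (x1 C v) ∧
    dist C (yStar C (Scl C v)) (x1 C v) + d C (x1 C v) = d C (yStar C (Scl C v)) := by
  obtain ⟨hy, hydown⟩ := yStar_props C hg
  obtain ⟨hqP, hqanc, hqdist⟩ := qWit_spec C hydown
  obtain ⟨hxout, hxsupp, hxpre⟩ := x1_spec C hy hq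
  obtain ⟨hzq, hdzq, hxdown, hsumeq⟩ := down_inherit C hqP hqanc hqdist hxsupp
  obtain ⟨hancyx, _, _⟩ := desc_split C hqanc hxsupp
  -- x1 is the top of its own cluster
  have hxtop : x1 C v = minD C (Scl C (x1 C v)) := by
    by_contra hne
    set t' := minD C (Scl C (x1 C v)) with ht'
    have htanc : anc C t' (x1 C v) := top_anc' C _ (x1 C v) rfl (self_mem_Scl C _)
    have ht'mem : t' ∈ Scl C (x1 C v) := minD_mem C (Scl_nonempty C _)
    have hclt : C.cl t' = C.cl (x1 C v) := (mem_Scl C).mp ht'mem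
    -- t' lies on path(x1, rho) = path(x1, y) ++ path(y, rho)
    have hsplit := (pathB_split C hancyx).1
    have htanc' := htanc
    rw [anc, hsplit] at htanc'
    rcases (Walk.mem_support_append_iff _ _).mp htanc' with hcase | hcase
    · -- t' on path from x1 down?? no: on path x1 -> y, i.e. within prefix: t' ∈ A or t' = x1
      have ht'' : t' ∈ (pathB C (yStar C (Scl C v)) (x1 C v)).support := by
        rw [pathB_reverse C (yStar C (Scl C v)) (x1 C v), Walk.support_reverse,
          List.mem_reverse]
        exact hcase
      have := hxpre t' ht'' (fun he => hne (by rw [← he, ht']))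
      -- t' ∈ Scl C v and also cl t' = cl x1 ⇒ x1 ∈ Scl C v, contradiction
      apply hxout
      rw [mem_Scl, ← hclt]
      exact (mem_Scl C).mp this
    · -- t' is an ancestor of y: then y lies on path(x1, t') which is inside cluster of x1
      have hcomp := (pathB_comp C hancyx hcase).1
      have hymem : yStar C (Scl C v) ∈ (pathB C (x1 C v) t').support := by
        rw [hcomp]
        exact (Walk.mem_support_append_iff _ _).mpr (Or.inr (Walk.start_mem_support _))
      have hcl := support_in_cluster C hclt.symm _ hymem
      -- cl y = cl t' = cl x1 ⇒ x1 ∈ Scl C v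
      apply hxout
      rw [mem_Scl]
      have hyv : C.cl (yStar C (Scl C v)) = C.cl v := (mem_Scl C).mp hy
      rw [← hyv, ← hclt]
      exact hcl.symm
  have hggx : grounded C (Scl C (x1 C v)) := by
    apply grounded_of_top_down C (Scl_nonempty C _)
    rw [← hxtop]; exact hxdown
  refine ⟨hxout, hxdown, hxtop, hggx, ?_, hsumeq⟩
  -- depth increases strictly
  have hxy : x1 C v ≠ yStar C (Scl C v) := fun he => hxout (he ▸ hy)
  have hd1 : depth C (yStar C (Scl C v)) ≤ depth C (x1 C v) := anc_depth_le C hancyx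
  have hd2 : yStar C (Scl C v) ≠ x1 C v := fun he => hxy he.symm
  have hstrict : depth C (yStar C (Scl C v)) < depth C (x1 C v) := by
    rcases lt_or_eq_of_le hd1 with h | h
    · exact h
    · exact absurd (anc_eq_of_depth_le C hancyx (le_of_eq h.symm)) hd2
  have hd3 : depth C (minD C (Scl C v)) ≤ depth C (yStar C (Scl C v)) :=
    minD_min C (Scl_nonempty C v) hy
  omega

/-! ### The recursive assignment -/

noncomputable def muA (A : Finset V) : ℕ :=
  if grounded C A then Fintype.card V - depth C (minD C A)
  else Fintype.card V + 1 + depth C (minD C A)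

noncomputable def mu (v : V) : ℕ := muA C (Scl C v)

lemma mu_lt_exit {v : V} (hg : grounded C (Scl C v))
    (hq : qWit C (yStar C (Scl C v)) ∉ Scl C v) :
    mu C (x1 C v) < mu C v := by
  obtain ⟨hxout, hxdown, hxtop, hggx, hdepth, hsum⟩ := x1_props C hg hq
  rw [mu, mu, muA, muA, if_pos hg, if_pos hggx, ← hxtop]
  have hcard := depth_lt_card C (x1 C v)
  omega

lemma not_down_top_of_airborne {v : V} (h : ¬ grounded C (Scl C v)) :
    ¬ down C (minD C (Scl C v)) :=
  fun hd => h (grounded_of_top_down C (Scl_nonempty C v) hd)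

lemma top_ne_rho_of_airborne {v : V} (h : ¬ grounded C (Scl C v)) :
    minD C (Scl C v) ≠ rho C :=
  ne_rho_of_not_down C (not_down_top_of_airborne C h)

lemma mu_lt_parent {v : V} (h : ¬ grounded C (Scl C v)) :
    mu C (parent C (minD C (Scl C v))) < mu C v := by
  have htrho : minD C (Scl C v) ≠ rho C := top_ne_rho_of_airborne C h
  have hdp : depth C (minD C (Scl C v)) = depth C (parent C (minD C (Scl C v))) + 1 :=
    depth_parent C htrho
  have hle : depth C (minD C (Scl C (parent C (minD C (Scl C v)))))
      ≤ depth C (parent C (minD C (Scl C v))) :=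
    minD_min C (Scl_nonempty C _) (self_mem_Scl C _)
  rw [mu, mu, muA, muA, if_neg h]
  by_cases hg2 : grounded C (Scl C (parent C (minD C (Scl C v))))
  · rw [if_pos hg2]
    have := depth_lt_card C (minD C (Scl C (parent C (minD C (Scl C v)))))
    omega
  · rw [if_neg hg2]
    omega

noncomputable def FFA : (A : {A : Finset V // ∃ v, A = Scl C v}) → V := fun A =>
  if hg : grounded C A.1 then
    if hq : qWit C (yStar C A.1) ∈ A.1 then qWit C (yStar C A.1)
    else FFA ⟨Scl C (x1A C A.1), x1A C A.1, rfl⟩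
  else FFA ⟨Scl C (parent C (minD C A.1)), parent C (minD C A.1), rfl⟩
termination_by A => muA C A.1
decreasing_by
  · obtain ⟨A, v, hv⟩ := A
    simp only at hg hq ⊢
    subst hv
    exact mu_lt_exit C hg hq
  · obtain ⟨A, v, hv⟩ := A
    simp only at hg ⊢
    subst hv
    exact mu_lt_parent C hg

noncomputable def FF (v : V) : V := FFA C ⟨Scl C v, v, rfl⟩

lemma FF_congr {u v : V} (h : C.cl u = C.cl v) : FF C u = FF C v := by
  rw [FF, FF]
  exact congrArg (FFA C) (Subtype.ext (Scl_eq_of_mem C ((mem_Scl C).mpr h)))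

lemma FF_eq_inside {v : V} (hg : grounded C (Scl C v))
    (hq : qWit C (yStar C (Scl C v)) ∈ Scl C v) :
    FF C v = qWit C (yStar C (Scl C v)) := by
  rw [FF]
  conv_lhs => rw [FFA]
  rw [dif_pos hg, dif_pos hq]

lemma FF_eq_exit {v : V} (hg : grounded C (Scl C v))
    (hq : qWit C (yStar C (Scl C v)) ∉ Scl C v) :
    FF C v = FF C (x1 C v) := by
  rw [FF, FF]
  conv_lhs => rw [FFA]
  rw [dif_pos hg, dif_neg hq]
  exact congrArg (FFA C) (Subtype.ext rfl)

lemma FF_eq_up {v : V} (hg : ¬ grounded C (Scl C v)) :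
    FF C v = FF C (parent C (minD C (Scl C v))) := by
  rw [FF, FF]
  conv_lhs => rw [FFA]
  rw [dif_neg hg]

/-! ### The main invariant -/

def Sfset (v : V) : Set V := {x | FF C x = FF C v}

lemma mem_Sfset_of_cl {x v : V} (h : C.cl x = C.cl v) : x ∈ Sfset C v := FF_congr C h

lemma gdist_glue_walk {S : Set V} {u z t : V} (p : C.T.Walk u z)
    (hs : ∀ a ∈ p.support, a ∈ S) :
    gdist C.w S u t ≤ wcost C p + gdist C.w S z t := by
  rw [← walkCost_support]
  exact gdist_glue C (isWalkIn_support C p hs)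

lemma main_inv : ∀ n (v : V), mu C v = n →
    FF C v ∈ C.P ∧
    (grounded C (Scl C v) → ∀ u ∈ Scl C v,
      gdist C.w (Sfset C v) u (FF C v)
        ≤ dist C u (yStar C (Scl C v)) + d C (yStar C (Scl C v))) ∧
    (¬ grounded C (Scl C v) →
      gdist C.w (Sfset C v) (minD C (Scl C v)) (FF C v)
        ≤ d C (minD C (Scl C v)) + 2 * C.Δ) := by
  intro n
  induction n using Nat.strong_induction_on with
  | _ n ih =>
    intro v hn
    by_cases hg : grounded C (Scl C v)
    · obtain ⟨hy, hydown⟩ := yStar_props C hg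
      obtain ⟨hqP, hqanc, hqdist⟩ := qWit_spec C hydown
      have hcly : C.cl (yStar C (Scl C v)) = C.cl v := (mem_Scl C).mp hy
      by_cases hq : qWit C (yStar C (Scl C v)) ∈ Scl C v
      · -- portal inside the cluster
        have hFv := FF_eq_inside C hg hq
        refine ⟨by rw [hFv]; exact hqP, ?_, fun h => absurd hg h⟩
        intro _ u hu
        have hclu : C.cl u = C.cl v := (mem_Scl C).mp hu
        have hclq : C.cl (qWit C (yStar C (Scl C v))) = C.cl v := (mem_Scl C).mp hq
        have hsupp : ∀ z ∈ ((pathB C u (yStar C (Scl C v))).append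
            (pathB C (yStar C (Scl C v)) (qWit C (yStar C (Scl C v))))).support,
            z ∈ Sfset C v := by
          intro z hz
          rcases (Walk.mem_support_append_iff _ _).mp hz with hz | hz
          · have hc := support_in_cluster C (by rw [hclu, hcly]) z hz
            exact mem_Sfset_of_cl C (by rw [hc, hcly])
          · have hc := support_in_cluster C (by rw [hcly, hclq]) z hz
            exact mem_Sfset_of_cl C (by rw [hc, hclq])
        have hW := gdist_le_wcost C _ hsupp
        rw [wcost_append] at hW
        rw [hFv]
        calc gdist C.w (Sfset C v) u (qWit C (yStar C (Scl C v)))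
            ≤ wcost C (pathB C u (yStar C (Scl C v)))
              + wcost C (pathB C (yStar C (Scl C v)) (qWit C (yStar C (Scl C v)))) := hW
          _ = dist C u (yStar C (Scl C v))
              + dist C (yStar C (Scl C v)) (qWit C (yStar C (Scl C v))) := rfl
          _ = dist C u (yStar C (Scl C v)) + d C (yStar C (Scl C v)) := by rw [hqdist]
      · -- exit case
        have hFv := FF_eq_exit C hg hq
        obtain ⟨hxout, hxdown, hxtop, hggx, hdepth, hsum⟩ := x1_props C hg hq
        have hmu : mu C (x1 C v) < n := hn ▸ mu_lt_exit C hg hq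
        have IH := ih _ hmu (x1 C v) rfl
        have hx_self : x1 C v ∈ Scl C (x1 C v) := self_mem_Scl C _
        have hbx := IH.2.1 hggx (x1 C v) hx_self
        have hynew := yStar_spec C (DwnF_nonempty_of_grounded C hggx)
        have hb2 : dist C (x1 C v) (yStar C (Scl C (x1 C v)))
            + d C (yStar C (Scl C (x1 C v))) ≤ d C (x1 C v) := by
          have h1 : nuv C (Scl C (x1 C v))
              ≤ dist C (minD C (Scl C (x1 C v))) (x1 C v) + d C (x1 C v) :=
            nuv_le C hx_self hxdown
          rw [← hxtop, dist_self, zero_add] at h1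
          have h2 := hynew.2
          rw [← hxtop] at h2
          rw [← h2]
          exact h1
        have hbx' : gdist C.w (Sfset C (x1 C v)) (x1 C v) (FF C (x1 C v))
            ≤ d C (x1 C v) := le_trans hbx hb2
        have hsets : Sfset C (x1 C v) = Sfset C v := by
          unfold Sfset; rw [← hFv]
        refine ⟨by rw [hFv]; exact IH.1, ?_, fun h => absurd hg h⟩
        intro _ u hu
        have hclu : C.cl u = C.cl v := (mem_Scl C).mp hu
        have hgx1 : gdist C.w (Sfset C v) (x1 C v) (FF C v) ≤ d C (x1 C v) := by
          rw [hFv, ← hsets]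
          exact hbx'
        have hsupp1 : ∀ a ∈ (pathB C u (yStar C (Scl C v))).support, a ∈ Sfset C v := by
          intro z hz
          have hc := support_in_cluster C (by rw [hclu, hcly]) z hz
          exact mem_Sfset_of_cl C (by rw [hc, hcly])
        have hsupp2 : ∀ a ∈ (pathB C (yStar C (Scl C v)) (x1 C v)).support,
            a ∈ Sfset C v := by
          intro z hz
          by_cases hzx : z = x1 C v
          · subst hzx
            exact hFv.symm
          · have hzA := (x1_spec C hy hq).2.2 z hz hzx
            exact mem_Sfset_of_cl C ((mem_Scl C).mp hzA)
        calc gdist C.w (Sfset C v) u (FF C v)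
            ≤ wcost C (pathB C u (yStar C (Scl C v)))
              + gdist C.w (Sfset C v) (yStar C (Scl C v)) (FF C v) :=
              gdist_glue_walk C _ hsupp1
          _ ≤ wcost C (pathB C u (yStar C (Scl C v)))
              + (wcost C (pathB C (yStar C (Scl C v)) (x1 C v))
                + gdist C.w (Sfset C v) (x1 C v) (FF C v)) :=
              add_le_add le_rfl (gdist_glue_walk C _ hsupp2)
          _ ≤ dist C u (yStar C (Scl C v))
              + (dist C (yStar C (Scl C v)) (x1 C v) + d C (x1 C v)) := by
              exact add_le_add le_rfl (add_le_add le_rfl hgx1)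
          _ = dist C u (yStar C (Scl C v)) + d C (yStar C (Scl C v)) := by rw [hsum]
    · -- airborne case
      have hFv := FF_eq_up C hg
      have hndt : ¬ down C (minD C (Scl C v)) := not_down_top_of_airborne C hg
      have htrho : minD C (Scl C v) ≠ rho C := ne_rho_of_not_down C hndt
      have hdt : d C (minD C (Scl C v))
          = C.w (minD C (Scl C v)) (parent C (minD C (Scl C v)))
            + d C (parent C (minD C (Scl C v))) := notDown_step C hndt
      have hmu : mu C (parent C (minD C (Scl C v))) < n := hn ▸ mu_lt_parent C hg
      have IH := ih _ hmu (parent C (minD C (Scl C v))) rfl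
      set t := minD C (Scl C v) with ht
      set p0 := parent C t with hp0
      have hKEY : gdist C.w (Sfset C p0) p0 (FF C p0) ≤ d C p0 + 2 * C.Δ := by
        have htUanc : anc C (minD C (Scl C p0)) p0 := top_anc' C _ p0 rfl (self_mem_Scl C p0)
        have hA'down : down C (Adown C p0) := Adown_down C p0
        have hA'anc : anc C (Adown C p0) p0 := Adown_anc C p0
        have hd0 : d C p0 = dist C p0 (Adown C p0) + d C (Adown C p0) := Adown_dist C p0
        have hclp0tU : C.cl p0 = C.cl (minD C (Scl C p0)) :=
          ((mem_Scl C).mp (minD_mem C (Scl_nonempty C p0))).symm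
        rcases anc_total C htUanc hA'anc with hcase | hcase
        · -- A' at or below tU
          have hcomp := pathB_comp C hA'anc hcase
          have hA'supp : Adown C p0 ∈ (pathB C p0 (minD C (Scl C p0))).support := by
            rw [hcomp.1]
            exact (Walk.mem_support_append_iff _ _).mpr (Or.inl (Walk.end_mem_support _))
          have hclA' : C.cl (Adown C p0) = C.cl (minD C (Scl C p0)) :=
            support_in_cluster C hclp0tU _ hA'supp
          have hA'U : Adown C p0 ∈ Scl C p0 := by
            rw [mem_Scl, hclA', ← hclp0tU]
          have hdistA'tU : dist C (Adown C p0) (minD C (Scl C p0)) ≤ C.Δ :=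
            dist_le_delta C hclA'
          have hdisttUA' : dist C (minD C (Scl C p0)) (Adown C p0) ≤ C.Δ := by
            rw [dist_comm]; exact hdistA'tU
          have hgU : grounded C (Scl C p0) := by
            rw [grounded]
            calc nuv C (Scl C p0)
                ≤ dist C (minD C (Scl C p0)) (Adown C p0) + d C (Adown C p0) :=
                  nuv_le C hA'U hA'down
              _ ≤ dist C (minD C (Scl C p0)) (Adown C p0)
                  + (dist C (Adown C p0) (minD C (Scl C p0)) + d C (minD C (Scl C p0))) :=
                  add_le_add le_rfl (d_triangle C _ _)
              _ = d C (minD C (Scl C p0))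
                  + (dist C (minD C (Scl C p0)) (Adown C p0)
                    + dist C (Adown C p0) (minD C (Scl C p0))) := by ring
              _ ≤ d C (minD C (Scl C p0)) + (C.Δ + C.Δ) :=
                  add_le_add le_rfl (add_le_add hdisttUA' hdistA'tU)
              _ = d C (minD C (Scl C p0)) + 2 * C.Δ := by ring
          have hbp0 := IH.2.1 hgU p0 (self_mem_Scl C p0)
          have hynewU := yStar_spec C (DwnF_nonempty_of_grounded C hgU)
          have hnu_le : nuv C (Scl C p0)
              ≤ dist C (minD C (Scl C p0)) (Adown C p0) + d C (Adown C p0) :=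
            nuv_le C hA'U hA'down
          calc gdist C.w (Sfset C p0) p0 (FF C p0)
              ≤ dist C p0 (yStar C (Scl C p0)) + d C (yStar C (Scl C p0)) := hbp0
            _ ≤ dist C p0 (minD C (Scl C p0))
                + (dist C (minD C (Scl C p0)) (yStar C (Scl C p0))
                  + d C (yStar C (Scl C p0))) := by
                rw [← add_assoc]; exact add_le_add (dist_triangle C _ _ _) le_rfl
            _ = dist C p0 (minD C (Scl C p0)) + nuv C (Scl C p0) := by rw [← hynewU.2]
            _ ≤ dist C p0 (minD C (Scl C p0))
                + (dist C (minD C (Scl C p0)) (Adown C p0) + d C (Adown C p0)) :=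
                add_le_add le_rfl hnu_le
            _ = (dist C p0 (Adown C p0) + d C (Adown C p0))
                + (dist C (Adown C p0) (minD C (Scl C p0))
                  + dist C (minD C (Scl C p0)) (Adown C p0)) := by
                rw [hcomp.2]; ring
            _ ≤ d C p0 + (C.Δ + C.Δ) := by
                rw [← hd0]
                exact add_le_add le_rfl (add_le_add hdistA'tU hdisttUA')
            _ = d C p0 + 2 * C.Δ := by ring
        · -- tU between p0 and A'
          have hAtU : Adown C (minD C (Scl C p0)) = Adown C p0 :=
            Adown_on_line C _ p0 (minD C (Scl C p0)) rfl htUanc hcase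
          have hdtU : d C (minD C (Scl C p0))
              = dist C (minD C (Scl C p0)) (Adown C p0) + d C (Adown C p0) := by
            have h := Adown_dist C (minD C (Scl C p0)); rwa [hAtU] at h
          have hcomp := pathB_comp C htUanc hcase
          have hdp0' : d C p0 = dist C p0 (minD C (Scl C p0)) + d C (minD C (Scl C p0)) := by
            rw [hd0, hcomp.2, hdtU, add_assoc]
          by_cases hgU : grounded C (Scl C p0)
          · have hbp0 := IH.2.1 hgU p0 (self_mem_Scl C p0)
            have hynewU := yStar_spec C (DwnF_nonempty_of_grounded C hgU)
            calc gdist C.w (Sfset C p0) p0 (FF C p0)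
                ≤ dist C p0 (yStar C (Scl C p0)) + d C (yStar C (Scl C p0)) := hbp0
              _ ≤ dist C p0 (minD C (Scl C p0))
                  + (dist C (minD C (Scl C p0)) (yStar C (Scl C p0))
                    + d C (yStar C (Scl C p0))) := by
                  rw [← add_assoc]; exact add_le_add (dist_triangle C _ _ _) le_rfl
              _ = dist C p0 (minD C (Scl C p0)) + nuv C (Scl C p0) := by rw [← hynewU.2]
              _ ≤ dist C p0 (minD C (Scl C p0)) + (d C (minD C (Scl C p0)) + 2 * C.Δ) :=
                  add_le_add le_rfl hgU
              _ = d C p0 + 2 * C.Δ := by rw [← add_assoc, ← hdp0']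
          · have hbtU := IH.2.2 hgU
            have hsuppU : ∀ a ∈ (pathB C p0 (minD C (Scl C p0))).support, a ∈ Sfset C p0 := by
              intro z hz
              have hc := support_in_cluster C hclp0tU z hz
              exact mem_Sfset_of_cl C (by rw [hc, ← hclp0tU])
            calc gdist C.w (Sfset C p0) p0 (FF C p0)
                ≤ wcost C (pathB C p0 (minD C (Scl C p0)))
                  + gdist C.w (Sfset C p0) (minD C (Scl C p0)) (FF C p0) :=
                  gdist_glue_walk C _ hsuppU
              _ ≤ dist C p0 (minD C (Scl C p0)) + (d C (minD C (Scl C p0)) + 2 * C.Δ) :=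
                  add_le_add le_rfl hbtU
              _ = d C p0 + 2 * C.Δ := by rw [← add_assoc, ← hdp0']
      refine ⟨by rw [hFv]; exact IH.1, fun h => absurd h hg, ?_⟩
      intro _
      have hadj : C.T.Adj t p0 := adj_parent_self C htrho
      have hclt : C.cl t = C.cl v := (mem_Scl C).mp (minD_mem C (Scl_nonempty C v))
      have hsuppE : ∀ a ∈ (Walk.cons hadj (Walk.nil : C.T.Walk p0 p0)).support,
          a ∈ Sfset C v := by
        intro z hz
        rw [Walk.support_cons, Walk.support_nil] at hz
        rcases List.mem_cons.mp hz with rfl | hz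
        · exact mem_Sfset_of_cl C hclt
        · have hz2 : z = p0 := by simpa using hz
          subst hz2
          exact hFv.symm
      calc gdist C.w (Sfset C v) t (FF C v)
          ≤ wcost C (Walk.cons hadj Walk.nil) + gdist C.w (Sfset C v) p0 (FF C v) :=
            gdist_glue_walk C _ hsuppE
        _ = C.w t p0 + gdist C.w (Sfset C p0) p0 (FF C p0) := by
            rw [wcost_cons, wcost_nil, add_zero]
            have hsets : Sfset C p0 = Sfset C v := by unfold Sfset; rw [← hFv]
            rw [hsets, ← hFv]
        _ ≤ C.w t p0 + (d C p0 + 2 * C.Δ) := add_le_add le_rfl hKEY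
        _ = d C t + 2 * C.Δ := by rw [← add_assoc, ← hdt]

end CAgg

open SimpleGraph CAgg


theorem stmt9 {V : Type*} [Fintype V] [Nonempty V]
    (T : SimpleGraph V) (hT : T.IsTree)
    (w : V → V → ENNReal)
    (hwsymm : ∀ u v, w u v = w v u)
    (hwE : ∀ u v, ¬ T.Adj u v → w u v = ⊤)
    (hwE' : ∀ u v, T.Adj u v → w u v < ⊤)
    {ι : Type*} (cl : V → ι) (P : Set V) (hP : P.Nonempty)
    (Δ : ENNReal) (hΔ : Δ < ⊤)
    (hdiam : ∀ u v : V, cl u = cl v → gdist w {x | cl x = cl v} u v ≤ Δ) :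
    ∃ f : ι → V, (∀ i, f i ∈ P) ∧
      (∀ v : V, gdist w {x | f (cl x) = f (cl v)} v (f (cl v)) ≤
        (⨅ p ∈ P, gdist w Set.univ v p) + 4 * Δ) ∧
      (∀ v : V, gdist w {x | f (cl x) = f (cl v)} v (f (cl v)) < ⊤) := by
  classical
  let C : CAgg.Ctx V ι := ⟨T, hT, w, hwsymm, hwE, hwE', cl, P, hP, Δ, hΔ, hdiam⟩
  set f : ι → V := fun i => if h : ∃ v, cl v = i then FF C h.choose else rho C with hf
  have hfv : ∀ v : V, f (cl v) = FF C v := by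
    intro v
    show (if h : ∃ u, cl u = cl v then FF C h.choose else rho C) = FF C v
    have h : ∃ u, cl u = cl v := ⟨v, rfl⟩
    rw [dif_pos h]
    exact FF_congr C h.choose_spec
  have hset : ∀ v : V, {x | f (cl x) = f (cl v)} = Sfset C v := by
    intro v
    ext x
    rw [Set.mem_setOf_eq, hfv x, hfv v]
    exact Iff.rfl
  have hbound : ∀ v : V, gdist w (Sfset C v) v (FF C v) ≤ d C v + 4 * Δ := by
    intro v
    have hclm : C.cl (minD C (Scl C v)) = C.cl v :=
      (mem_Scl C).mp (minD_mem C (Scl_nonempty C v))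
    have hdtop : d C (minD C (Scl C v)) ≤ Δ + d C v := by
      have h1 : dist C (minD C (Scl C v)) v ≤ Δ := dist_le_delta C hclm
      calc d C (minD C (Scl C v)) ≤ dist C (minD C (Scl C v)) v + d C v := d_triangle C _ _
        _ ≤ Δ + d C v := add_le_add h1 le_rfl
    by_cases hg : grounded C (Scl C v)
    · have h1 := (main_inv C _ v rfl).2.1 hg v (self_mem_Scl C v)
      have hy := (yStar_props C hg).1
      have hcly : C.cl (yStar C (Scl C v)) = C.cl v := (mem_Scl C).mp hy
      have h2 : dist C v (yStar C (Scl C v)) ≤ Δ := by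
        have : C.cl v = C.cl (yStar C (Scl C v)) := hcly.symm
        exact dist_le_delta C this
      have h3 : d C (yStar C (Scl C v)) ≤ d C (minD C (Scl C v)) + 2 * Δ := by
        have hnu := (yStar_spec C (DwnF_nonempty_of_grounded C hg)).2
        calc d C (yStar C (Scl C v))
            ≤ dist C (minD C (Scl C v)) (yStar C (Scl C v)) + d C (yStar C (Scl C v)) :=
              le_add_self
          _ = nuv C (Scl C v) := hnu.symm
          _ ≤ d C (minD C (Scl C v)) + 2 * Δ := hg
      calc gdist w (Sfset C v) v (FF C v)
          ≤ dist C v (yStar C (Scl C v)) + d C (yStar C (Scl C v)) := h1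
        _ ≤ Δ + (d C (minD C (Scl C v)) + 2 * Δ) := add_le_add h2 h3
        _ ≤ Δ + ((Δ + d C v) + 2 * Δ) := add_le_add le_rfl (add_le_add hdtop le_rfl)
        _ = d C v + 4 * Δ := by ring
    · have h1 := (main_inv C _ v rfl).2.2 hg
      have hsupp : ∀ a ∈ (pathB C v (minD C (Scl C v))).support, a ∈ Sfset C v := by
        intro z hz
        have hc := support_in_cluster C hclm.symm z hz
        exact mem_Sfset_of_cl C (hc.trans hclm)
      have h2 : dist C v (minD C (Scl C v)) ≤ Δ := by
        rw [CAgg.dist_comm C v (minD C (Scl C v))]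
        exact dist_le_delta C hclm
      calc gdist w (Sfset C v) v (FF C v)
          ≤ wcost C (pathB C v (minD C (Scl C v)))
            + gdist C.w (Sfset C v) (minD C (Scl C v)) (FF C v) :=
            gdist_glue_walk C _ hsupp
        _ ≤ Δ + (d C (minD C (Scl C v)) + 2 * Δ) := add_le_add h2 h1
        _ ≤ Δ + ((Δ + d C v) + 2 * Δ) := add_le_add le_rfl (add_le_add hdtop le_rfl)
        _ = d C v + 4 * Δ := by ring
  have hinf : ∀ v : V, d C v ≤ ⨅ p ∈ P, gdist w Set.univ v p := by
    intro v
    refine le_iInf₂ fun p hp => ?_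
    exact (d_le C hp).trans (dist_le_gdist C _ _ _)
  refine ⟨f, ?_, ?_, ?_⟩
  · intro i
    show (if h : ∃ v, cl v = i then FF C h.choose else rho C) ∈ P
    by_cases h : ∃ v, cl v = i
    · rw [dif_pos h]
      exact (main_inv C _ h.choose rfl).1
    · rw [dif_neg h]
      exact rho_mem C
  · intro v
    rw [hset v, hfv v]
    exact (hbound v).trans (add_le_add (hinf v) le_rfl)
  · intro v
    rw [hset v, hfv v]
    refine lt_of_le_of_lt (hbound v) ?_
    exact ENNReal.add_lt_top.mpr ⟨d_lt_top C v, ENNReal.mul_lt_top (by norm_num) hΔ⟩
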